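/- Let H be a Hilbert space, let C, A be compact self-adjoint operators with C ≥ 0, C + A ≥ 0, Ker(C) finite-dimensional with orthogonal projection P onto Ker(C), and set C₁ := C + P. Assume C₁^{-1/2} A C₁^{-1/2} extends to a compact operator on H. Then there exist finitely many vectors v₁,…,v_{l₀} ∈ H such that for any u ∈ H with ⟨u, vⱼ⟩ = 0 for all j, there is ε > 0 with C + A - ε (C₁^{1/2}u)⊗(C₁^{1/2}u) ≥ 0. -/

import Mathlib

open scoped InnerProductSpace

section Aux
variable {H : Type*} [NormedAddCommGroup H] [InnerProductSpace ℝ H] [CompleteSpace H]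

/-- rank one operator `y ↦ ⟪f, y⟫ • f` is compact. -/
lemma rankOne_isCompact (f : H) :
    IsCompactOperator ((ContinuousLinearMap.toSpanSingleton ℝ f).comp (innerSL ℝ f)) := by
  have h1 : IsCompactOperator (ContinuousLinearMap.toSpanSingleton ℝ f) := by
    refine ⟨(ContinuousLinearMap.toSpanSingleton ℝ f) '' Set.Icc (-1) 1,
      (isCompact_Icc.image (ContinuousLinearMap.toSpanSingleton ℝ f).continuous), ?_⟩
    filter_upwards [Icc_mem_nhds (by norm_num : (-1:ℝ) < 0) (by norm_num : (0:ℝ) < 1)] with t ht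
    exact Set.mem_image_of_mem _ ht
  exact h1.comp_clm (innerSL ℝ f)

/-- Cauchy-Schwarz for a nonneg symmetric operator. -/
lemma pos_cs (B : H →L[ℝ] H) (hsa : IsSelfAdjoint B)
    (hpos : ∀ y, 0 ≤ ⟪y, B y⟫_ℝ) (x y : H) :
    ⟪x, B y⟫_ℝ ^ 2 ≤ ⟪x, B x⟫_ℝ * ⟪y, B y⟫_ℝ := by
  have hsym := ContinuousLinearMap.isSelfAdjoint_iff_isSymmetric.mp hsa
  have h : ∀ t : ℝ, 0 ≤ ⟪y, B y⟫_ℝ * (t * t) + (2 * ⟪x, B y⟫_ℝ) * t + ⟪x, B x⟫_ℝ := by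
    intro t
    have := hpos (x + t • y)
    have e1 : ⟪x + t • y, B (x + t • y)⟫_ℝ
        = ⟪x, B x⟫_ℝ + t * ⟪x, B y⟫_ℝ + t * ⟪y, B x⟫_ℝ + t * t * ⟪y, B y⟫_ℝ := by
      simp [map_add, map_smul, inner_add_add_self, inner_add_left, inner_add_right,
        inner_smul_left, inner_smul_right]
      ring
    have e2 : ⟪y, B x⟫_ℝ = ⟪x, B y⟫_ℝ := by
      rw [real_inner_comm]; exact hsym x y
    rw [e1, e2] at this
    nlinarith [this]
  have hd := discrim_le_zero h
  rw [discrim] at hd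
  nlinarith [hd]

lemma opnorm_sq_le (B : H →L[ℝ] H) (hsa : IsSelfAdjoint B)
    (hpos : ∀ y, 0 ≤ ⟪y, B y⟫_ℝ) (y : H) :
    ‖B y‖ ^ 2 ≤ ‖B‖ * ⟪y, B y⟫_ℝ := by
  rcases eq_or_ne (B y) 0 with h | h
  · have : (0:ℝ) ≤ ‖B‖ * ⟪y, B y⟫_ℝ := mul_nonneg (norm_nonneg _) (hpos y)
    rw [h]; simpa using this
  · have hcs := pos_cs B hsa hpos (B y) y
    have h1 : ⟪B y, B y⟫_ℝ = ‖B y‖ ^ 2 := real_inner_self_eq_norm_sq _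
    have h2 : ⟪B y, B (B y)⟫_ℝ ≤ ‖B‖ * ‖B y‖ ^ 2 := by
      calc ⟪B y, B (B y)⟫_ℝ ≤ ‖B y‖ * ‖B (B y)‖ := real_inner_le_norm _ _
        _ ≤ ‖B y‖ * (‖B‖ * ‖B y‖) := by
            gcongr; exact B.le_opNorm _
        _ = ‖B‖ * ‖B y‖ ^ 2 := by ring
    have hny : (0:ℝ) < ‖B y‖ ^ 2 := by
      have := norm_pos_iff.mpr h
      positivity
    rw [h1] at hcs
    nlinarith [hpos y, hcs, h2]

end Aux

section Key
variable {H : Type*} [NormedAddCommGroup H] [InnerProductSpace ℝ H] [CompleteSpace H]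

lemma key_spectral (B' T' : H →L[ℝ] H) (hsa : IsSelfAdjoint B')
    (hpos : ∀ y, 0 ≤ ⟪y, B' y⟫_ℝ) (hT' : IsCompactOperator T')
    (hB' : ∀ y, B' y = y + T' y) :
    ∃ (l₀ : ℕ) (v : Fin l₀ → H), ∀ u : H, (∀ j, ⟪u, v j⟫_ℝ = 0) →
      ∃ ε : ℝ, 0 < ε ∧ ∀ y : H, ε * ⟪u, y⟫_ℝ ^ 2 ≤ ⟪y, B' y⟫_ℝ := by
  classical
  have hsym := ContinuousLinearMap.isSelfAdjoint_iff_isSymmetric.mp hsa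
  set N : Submodule ℝ H := LinearMap.ker (B' : H →ₗ[ℝ] H) with hN
  have hNclosed : IsClosed (N : Set H) := ContinuousLinearMap.isClosed_ker B'
  have hmemN : ∀ y : H, y ∈ N ↔ B' y = 0 := fun y => Iff.rfl
  -- a compact set containing the image of the closed unit ball under T'
  set K : Set H := closure (T' '' Metric.closedBall 0 1) with hK
  have hKc : IsCompact K := by
    have h := IsCompactOperator.isCompact_closure_image_closedBall (𝕜₁ := ℝ)
      (f := (T' : H →ₗ[ℝ] H)) hT' 1
    simpa using h
  have hKsub : ∀ y : H, ‖y‖ ≤ 1 → T' y ∈ K := fun y hy =>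
    subset_closure ⟨y, by simpa [Metric.mem_closedBall, dist_eq_norm] using hy, rfl⟩
  -- finite dimensionality of N
  have hfin : FiniteDimensional ℝ N := by
    have hsub : (N : Set H) ∩ Metric.closedBall 0 1 ⊆ (fun z => -z) '' K := by
      rintro y ⟨hy1, hy2⟩
      have hBy : B' y = 0 := (hmemN y).1 hy1
      have hyT : y = -(T' y) := by
        have h := hB' y
        rw [hBy] at h
        exact eq_neg_of_add_eq_zero_left h.symm
      exact ⟨T' y, hKsub y (by simpa [Metric.mem_closedBall, dist_eq_norm] using hy2), hyT.symm⟩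
    have hcpt : IsCompact ((N : Set H) ∩ Metric.closedBall 0 1) :=
      (hKc.image continuous_neg).of_isClosed_subset
        (hNclosed.inter Metric.isClosed_closedBall) hsub
    have hball : IsCompact (Metric.closedBall (0 : N) 1) := by
      rw [Subtype.isCompact_iff]
      convert hcpt using 1
      ext y
      constructor
      · rintro ⟨⟨y', hy'⟩, hmem, rfl⟩
        exact ⟨hy', by simpa [Metric.mem_closedBall, dist_eq_norm] using hmem⟩
      · rintro ⟨hy1, hy2⟩
        exact ⟨⟨y, hy1⟩, by simpa [Metric.mem_closedBall, dist_eq_norm] using hy2, rfl⟩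
    exact FiniteDimensional.of_isCompact_closedBall₀ ℝ one_pos hball
  -- the coercivity constant on the orthogonal complement
  have hdelta : ∃ δ : ℝ, 0 < δ ∧ ∀ y ∈ Nᗮ, δ * ‖y‖ ^ 2 ≤ ⟪y, B' y⟫_ℝ := by
    by_contra hcon
    push_neg at hcon
    have hz : ∀ n : ℕ, ∃ z : H, z ∈ Nᗮ ∧ ‖z‖ = 1 ∧
        ⟪z, B' z⟫_ℝ < 1 / (n + 1) := by
      intro n
      obtain ⟨y, hyN, hy⟩ := hcon (1 / (n + 1)) (by positivity)
      have hy0 : y ≠ 0 := by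
        rintro rfl
        simp at hy
      have hny : (0:ℝ) < ‖y‖ := norm_pos_iff.mpr hy0
      refine ⟨‖y‖⁻¹ • y, Nᗮ.smul_mem _ hyN, ?_, ?_⟩
      · rw [norm_smul]; simp [hny.ne']
      · have : ⟪‖y‖⁻¹ • y, B' (‖y‖⁻¹ • y)⟫_ℝ = ‖y‖⁻¹ * ‖y‖⁻¹ * ⟪y, B' y⟫_ℝ := by
          rw [map_smul, real_inner_smul_left, real_inner_smul_right]; ring
        rw [this]
        have h2 : ⟪y, B' y⟫_ℝ < 1 / (n + 1) * ‖y‖ ^ 2 := hy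
        have h3 : ‖y‖⁻¹ * ‖y‖⁻¹ * ⟪y, B' y⟫_ℝ < ‖y‖⁻¹ * ‖y‖⁻¹ * (1 / (n + 1) * ‖y‖ ^ 2) := by
          apply mul_lt_mul_of_pos_left h2 (by positivity)
        calc ‖y‖⁻¹ * ‖y‖⁻¹ * ⟪y, B' y⟫_ℝ
            < ‖y‖⁻¹ * ‖y‖⁻¹ * (1 / (n + 1) * ‖y‖ ^ 2) := h3
          _ = (‖y‖⁻¹ * ‖y‖) ^ 2 * (1 / (n + 1)) := by ring
          _ = 1 / (n + 1) := by rw [inv_mul_cancel₀ hny.ne', one_pow, one_mul]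
    choose z hz1 hz2 hz3 using hz
    -- B' (z n) → 0
    have hBzn : Filter.Tendsto (fun n => ‖B' (z n)‖) Filter.atTop (nhds 0) := by
      have hb : ∀ n : ℕ, ‖B' (z n)‖ ≤ Real.sqrt (‖B'‖ * (1 / (n + 1))) := by
        intro n
        have h1 : ‖B' (z n)‖ ^ 2 ≤ ‖B'‖ * ⟪z n, B' (z n)⟫_ℝ :=
          opnorm_sq_le B' hsa hpos (z n)
        have h2 : ‖B'‖ * ⟪z n, B' (z n)⟫_ℝ ≤ ‖B'‖ * (1 / (n + 1)) :=
          mul_le_mul_of_nonneg_left (le_of_lt (hz3 n)) (norm_nonneg _)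
        have h3 : ‖B' (z n)‖ ^ 2 ≤ ‖B'‖ * (1 / (n + 1)) := le_trans h1 h2
        calc ‖B' (z n)‖ = Real.sqrt (‖B' (z n)‖ ^ 2) := by
              rw [Real.sqrt_sq (norm_nonneg _)]
          _ ≤ Real.sqrt (‖B'‖ * (1 / (n + 1))) := Real.sqrt_le_sqrt h3
      have hlim : Filter.Tendsto (fun n : ℕ => Real.sqrt (‖B'‖ * (1 / (n + 1))))
          Filter.atTop (nhds 0) := by
        have h0 : Filter.Tendsto (fun n : ℕ => ‖B'‖ * (1 / (n + 1)))
            Filter.atTop (nhds 0) := by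
          simpa using tendsto_one_div_add_atTop_nhds_zero_nat.const_mul ‖B'‖
        have h1 := (Real.continuous_sqrt.tendsto 0).comp h0
        simpa only [Function.comp_def, Real.sqrt_zero] using h1
      exact squeeze_zero (fun n => norm_nonneg _) hb hlim
    have hBz : Filter.Tendsto (fun n => B' (z n)) Filter.atTop (nhds 0) :=
      tendsto_zero_iff_norm_tendsto_zero.mpr hBzn
    -- extract convergent subsequence of T' (z n)
    obtain ⟨w, hwK, φ, hφ, hTφ⟩ := hKc.tendsto_subseq
      (fun n => hKsub (z n) (le_of_eq (hz2 n)))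
    have hzφ : Filter.Tendsto (fun n => z (φ n)) Filter.atTop (nhds (-w)) := by
      have heq : (fun n => z (φ n)) = fun n => B' (z (φ n)) - T' (z (φ n)) := by
        funext n
        have h := hB' (z (φ n))
        rw [h]; abel
      rw [heq]
      have h1 : Filter.Tendsto (fun n => B' (z (φ n))) Filter.atTop (nhds 0) :=
        hBz.comp hφ.tendsto_atTop
      simpa using h1.sub hTφ
    have hw1 : ‖(-w : H)‖ = 1 := by
      have h1 : Filter.Tendsto (fun n => ‖z (φ n)‖) Filter.atTop (nhds ‖(-w : H)‖) :=
        hzφ.norm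
      have h2 : Filter.Tendsto (fun n => ‖z (φ n)‖) Filter.atTop (nhds 1) := by
        simpa [hz2] using tendsto_const_nhds (α := ℝ) (f := Filter.atTop (α := ℕ))
      exact tendsto_nhds_unique h1 h2
    have hwOrth : (-w : H) ∈ Nᗮ :=
      (N.isClosed_orthogonal).mem_of_tendsto hzφ
        (Filter.Eventually.of_forall fun n => hz1 (φ n))
    have hwN : (-w : H) ∈ N := by
      rw [hmemN]
      have h1 : Filter.Tendsto (fun n => B' (z (φ n))) Filter.atTop (nhds (B' (-w))) :=
        (B'.continuous.tendsto _).comp hzφ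
      have h2 : Filter.Tendsto (fun n => B' (z (φ n))) Filter.atTop (nhds 0) :=
        hBz.comp hφ.tendsto_atTop
      exact tendsto_nhds_unique h1 h2
    have : (-w : H) = 0 := by
      have := (Submodule.mem_orthogonal N (-w)).mp hwOrth (-w) hwN
      simpa [inner_self_eq_zero] using this
    rw [this] at hw1
    simp at hw1
  obtain ⟨δ, hδ, hcoer⟩ := hdelta
  -- the vectors: a basis of N
  let b := Module.finBasis ℝ N
  refine ⟨Module.finrank ℝ N, fun j => (b j : H), ?_⟩
  intro u hu
  have huOrth : u ∈ Nᗮ := by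
    rw [Submodule.mem_orthogonal]
    intro x hx
    have hxeq : (⟨x, hx⟩ : N) = ∑ j, b.repr ⟨x, hx⟩ j • b j := (b.sum_repr ⟨x, hx⟩).symm
    have hxH : x = ∑ j, b.repr ⟨x, hx⟩ j • (b j : H) := by
      calc x = ((⟨x, hx⟩ : N) : H) := rfl
        _ = ((∑ j, b.repr ⟨x, hx⟩ j • b j : N) : H) := by rw [← hxeq]
        _ = ∑ j, b.repr ⟨x, hx⟩ j • (b j : H) := by
            push_cast [Submodule.coe_sum]
            rfl
    rw [hxH, sum_inner]
    refine Finset.sum_eq_zero fun j _ => ?_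
    rw [real_inner_smul_left]
    rw [real_inner_comm]
    rw [hu j]
    ring
  refine ⟨δ / (‖u‖ ^ 2 + 1), by positivity, ?_⟩
  intro y
  set Q : H := (Submodule.orthogonalProjection N y : H) with hQ
  set y' : H := y - Q with hy'
  have hy'Orth : y' ∈ Nᗮ := Submodule.sub_starProjection_mem_orthogonal (K := N) y
  have hQN : Q ∈ N := (Submodule.orthogonalProjection N y).2
  have hBQ : B' Q = 0 := (hmemN Q).1 hQN
  have hsplit : ⟪y, B' y⟫_ℝ = ⟪y', B' y'⟫_ℝ := by
    have h1 : B' y = B' y' := by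
      have : y = y' + Q := by rw [hy']; abel
      rw [this, map_add, hBQ, add_zero]
    rw [h1]
    have : y = Q + y' := by rw [hy']; abel
    rw [this, inner_add_left]
    have h2 : ⟪Q, B' y'⟫_ℝ = 0 := by
      have h4 : ⟪B' Q, y'⟫_ℝ = ⟪Q, B' y'⟫_ℝ := hsym Q y'
      rw [← h4, hBQ, inner_zero_left]
    rw [h2, zero_add]
  have hinner : ⟪u, y⟫_ℝ = ⟪u, y'⟫_ℝ := by
    have : y = Q + y' := by rw [hy']; abel
    rw [this, inner_add_right]
    have h2 : ⟪u, Q⟫_ℝ = 0 := by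
      rw [real_inner_comm]
      exact (Submodule.mem_orthogonal N u).mp huOrth Q hQN
    rw [h2, zero_add]
  have hcs : ⟪u, y'⟫_ℝ ^ 2 ≤ ‖u‖ ^ 2 * ‖y'‖ ^ 2 := by
    have h1 : |⟪u, y'⟫_ℝ| ≤ ‖u‖ * ‖y'‖ := abs_real_inner_le_norm u y'
    nlinarith [abs_nonneg ⟪u, y'⟫_ℝ, sq_abs ⟪u, y'⟫_ℝ]
  have hco : δ * ‖y'‖ ^ 2 ≤ ⟪y', B' y'⟫_ℝ := hcoer y' hy'Orth
  rw [hsplit, hinner]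
  have hpos' : (0:ℝ) < ‖u‖ ^ 2 + 1 := by positivity
  rw [div_mul_eq_mul_div, div_le_iff₀ hpos']
  nlinarith [sq_nonneg ‖y'‖, hδ.le, sq_nonneg ‖u‖]
end Key


/-- Rank-one perturbation criterion for C + A: given compact self-adjoint C, A with
C ≥ 0, C + A ≥ 0, finite-dimensional Ker C with orthogonal projection P, C₁ = C + P,
square root S of C₁, and assuming C₁^{-1/2} A C₁^{-1/2} extends to a compact operator
(i.e. A = S T S for some compact self-adjoint T), there exist v₁,…,v_{l₀} ∈ H such that
whenever ⟨u, vⱼ⟩ = 0 for all j, one has C + A - ε (C₁^{1/2}u)⊗(C₁^{1/2}u) ≥ 0 for some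
ε > 0. -/
theorem stmt8 {H : Type*} [NormedAddCommGroup H] [InnerProductSpace ℝ H]
    [CompleteSpace H]
    (C A P S : H →L[ℝ] H)
    (hCc : IsCompactOperator C) (hAc : IsCompactOperator A)
    (hCsa : IsSelfAdjoint C) (hAsa : IsSelfAdjoint A)
    (hCpos : ∀ x : H, 0 ≤ ⟪x, C x⟫_ℝ)
    (hCApos : ∀ x : H, 0 ≤ ⟪x, C x⟫_ℝ + ⟪x, A x⟫_ℝ)
    (hker : FiniteDimensional ℝ (LinearMap.ker (C : H →ₗ[ℝ] H)))
    (hPsa : IsSelfAdjoint P) (hPproj : P ∘L P = P)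
    (hPrange : LinearMap.range (P : H →ₗ[ℝ] H) = LinearMap.ker (C : H →ₗ[ℝ] H))
    (hSsa : IsSelfAdjoint S) (hSpos : ∀ x : H, 0 ≤ ⟪x, S x⟫_ℝ)
    (hSsq : S ∘L S = C + P)
    (hcomp : ∃ T : H →L[ℝ] H, IsCompactOperator T ∧ IsSelfAdjoint T ∧
      S ∘L T ∘L S = A) :
    ∃ (l₀ : ℕ) (v : Fin l₀ → H), ∀ u : H, (∀ j, ⟪u, v j⟫_ℝ = 0) →
      ∃ ε : ℝ, 0 < ε ∧
        ∀ x : H, 0 ≤ ⟪x, C x⟫_ℝ + ⟪x, A x⟫_ℝ - ε * ⟪S u, x⟫_ℝ ^ 2 := by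
  classical
  obtain ⟨T, hTc, hTsa, hTS⟩ := hcomp
  have hSsym := ContinuousLinearMap.isSelfAdjoint_iff_isSymmetric.mp hSsa
  have hPsym := ContinuousLinearMap.isSelfAdjoint_iff_isSymmetric.mp hPsa
  have hTsym := ContinuousLinearMap.isSelfAdjoint_iff_isSymmetric.mp hTsa
  have hCsym := ContinuousLinearMap.isSelfAdjoint_iff_isSymmetric.mp hCsa
  have hSsym' : ∀ a b : H, ⟪S a, b⟫_ℝ = ⟪a, S b⟫_ℝ := fun a b => hSsym a b
  have hPsym' : ∀ a b : H, ⟪P a, b⟫_ℝ = ⟪a, P b⟫_ℝ := fun a b => hPsym a b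
  have hTsym' : ∀ a b : H, ⟪T a, b⟫_ℝ = ⟪a, T b⟫_ℝ := fun a b => hTsym a b
  have hCsym' : ∀ a b : H, ⟪C a, b⟫_ℝ = ⟪a, C b⟫_ℝ := fun a b => hCsym a b
  have hSS : ∀ x : H, S (S x) = C x + P x := by
    intro x
    have := congrArg (fun (f : H →L[ℝ] H) => f x) hSsq
    simpa using this
  have hPP : ∀ x : H, P (P x) = P x := by
    intro x
    have := congrArg (fun (f : H →L[ℝ] H) => f x) hPproj
    simpa using this
  -- injectivity of S
  have hSinj : ∀ z : H, S z = 0 → z = 0 := by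
    intro z hz
    have h1 : C z + P z = 0 := by rw [← hSS, hz, map_zero]
    have h2 : ⟪z, C z⟫_ℝ + ⟪z, P z⟫_ℝ = 0 := by
      rw [← inner_add_right, h1, inner_zero_right]
    have h3 : ⟪z, P z⟫_ℝ = ⟪P z, P z⟫_ℝ := by
      conv_lhs => rw [← hPP z]
      exact (hPsym' z (P z)).symm
    have h4 : (0:ℝ) ≤ ⟪P z, P z⟫_ℝ := real_inner_self_nonneg
    have h5 : ⟪P z, P z⟫_ℝ = 0 := by linarith [hCpos z, h2, h3.symm ▸ h4]
    have hPz : P z = 0 := inner_self_eq_zero.mp h5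
    have hCz : C z = 0 := by
      have := h1
      rw [hPz, add_zero] at this
      exact this
    have hzker : z ∈ LinearMap.range (P : H →ₗ[ℝ] H) := by
      rw [hPrange]; exact hCz
    obtain ⟨w, hw⟩ := hzker
    have : P z = z := by
      calc P z = P (P w) := by rw [show P w = z from hw]
        _ = P w := hPP w
        _ = z := hw
    rw [hPz] at this
    exact this.symm
  -- density of the range of S
  have hdense : Dense (Set.range (⇑S)) := by
    have htop : (LinearMap.range (S : H →ₗ[ℝ] H)).topologicalClosure = ⊤ := by
      rw [Submodule.topologicalClosure_eq_top_iff]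
      rw [Submodule.eq_bot_iff]
      intro z hz
      have h1 : ∀ y : H, ⟪S y, z⟫_ℝ = 0 := fun y =>
        (Submodule.mem_orthogonal _ z).mp hz (S y) (LinearMap.mem_range_self _ y)
      have h2 : S z = 0 := by
        have h3 : ⟪S z, z⟫_ℝ = 0 := h1 z
        have h4 : ∀ y : H, ⟪y, S z⟫_ℝ = 0 := by
          intro y
          rw [← hSsym' y z]
          exact h1 y
        have h5 := h4 (S z)
        rwa [inner_self_eq_zero] at h5
      exact hSinj z h2
    have := Submodule.dense_iff_topologicalClosure_eq_top.mpr htop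
    simpa [LinearMap.coe_range] using this
  -- orthonormal basis of ker C
  set Kc : Submodule ℝ H := LinearMap.ker (C : H →ₗ[ℝ] H) with hKc
  let e := stdOrthonormalBasis ℝ Kc
  set n : ℕ := Module.finrank ℝ Kc with hn
  set f : Fin n → H := fun i => S ((e i : Kc) : H) with hf
  have hPe : ∀ i, P ((e i : Kc) : H) = ((e i : Kc) : H) := by
    intro i
    have hmem : ((e i : Kc) : H) ∈ LinearMap.range (P : H →ₗ[ℝ] H) := by
      rw [hPrange]; exact (e i).2
    obtain ⟨w, hw⟩ := hmem
    calc P ((e i : Kc) : H) = P (P w) := by rw [show P w = ((e i : Kc) : H) from hw]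
      _ = P w := hPP w
      _ = _ := hw
  have hCe : ∀ i, C ((e i : Kc) : H) = 0 := fun i => (e i).2
  -- ⟪x, P x⟫ = ∑ ⟪e i, x⟫²
  have hPsum : ∀ x : H, ⟪x, P x⟫_ℝ = ∑ i, ⟪((e i : Kc) : H), x⟫_ℝ ^ 2 := by
    intro x
    have hPxmem : P x ∈ Kc := by
      rw [← hPrange]
      exact LinearMap.mem_range_self (P : H →ₗ[ℝ] H) x
    set px : Kc := ⟨P x, hPxmem⟩ with hpx
    have h1 : ⟪x, P x⟫_ℝ = ⟪P x, P x⟫_ℝ := by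
      conv_lhs => rw [← hPP x]
      exact (hPsym' x (P x)).symm
    have h2 : ⟪px, px⟫_ℝ = ⟪P x, P x⟫_ℝ := Submodule.coe_inner Kc px px
    have h3 := e.sum_inner_mul_inner px px
    have h4 : ∀ i, ⟪px, e i⟫_ℝ = ⟪((e i : Kc) : H), x⟫_ℝ := by
      intro i
      rw [Submodule.coe_inner]
      calc ⟪(px : H), ((e i : Kc) : H)⟫_ℝ = ⟪P x, ((e i : Kc) : H)⟫_ℝ := rfl
        _ = ⟪x, P ((e i : Kc) : H)⟫_ℝ := hPsym' x _
        _ = ⟪x, ((e i : Kc) : H)⟫_ℝ := by rw [hPe]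
        _ = ⟪((e i : Kc) : H), x⟫_ℝ := real_inner_comm _ _
    rw [h1, ← h2, ← h3]
    refine Finset.sum_congr rfl fun i _ => ?_
    have ha := h4 i
    have hb : ⟪e i, px⟫_ℝ = ⟪((e i : Kc) : H), x⟫_ℝ := (real_inner_comm (e i) px).symm.trans ha
    rw [ha, hb]
    ring
  -- ⟪f i, S x⟫ = ⟪e i, x⟫
  have hfS : ∀ i (x : H), ⟪f i, S x⟫_ℝ = ⟪((e i : Kc) : H), x⟫_ℝ := by
    intro i x
    calc ⟪f i, S x⟫_ℝ = ⟪S ((e i : Kc) : H), S x⟫_ℝ := rfl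
      _ = ⟪((e i : Kc) : H), S (S x)⟫_ℝ := hSsym' _ _
      _ = ⟪((e i : Kc) : H), C x + P x⟫_ℝ := by rw [hSS]
      _ = ⟪C ((e i : Kc) : H), x⟫_ℝ + ⟪P ((e i : Kc) : H), x⟫_ℝ := by
          rw [inner_add_right, ← hPsym' _ x, ← hCsym' _ x]
      _ = ⟪((e i : Kc) : H), x⟫_ℝ := by rw [hCe, hPe, inner_zero_left, zero_add]
  -- the finite rank operator D
  set D : H →L[ℝ] H :=
    ∑ i, (ContinuousLinearMap.toSpanSingleton ℝ (f i)).comp (innerSL ℝ (f i)) with hD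
  have hDapp : ∀ y : H, D y = ∑ i, ⟪f i, y⟫_ℝ • f i := by
    intro y
    rw [hD, ContinuousLinearMap.sum_apply]
    refine Finset.sum_congr rfl fun i _ => ?_
    simp [ContinuousLinearMap.toSpanSingleton_apply]
  have hDinner : ∀ x y : H, ⟪x, D y⟫_ℝ = ∑ i, ⟪f i, x⟫_ℝ * ⟪f i, y⟫_ℝ := by
    intro x y
    rw [hDapp, inner_sum]
    refine Finset.sum_congr rfl fun i _ => ?_
    rw [real_inner_smul_right]
    rw [real_inner_comm x (f i)]
    ring
  have hDsym : (D : H →ₗ[ℝ] H).IsSymmetric := by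
    intro x y
    show ⟪D x, y⟫_ℝ = ⟪x, D y⟫_ℝ
    have h1 : ⟪D x, y⟫_ℝ = ∑ i, ⟪f i, x⟫_ℝ * ⟪f i, y⟫_ℝ := by
      rw [real_inner_comm, hDinner]
      exact Finset.sum_congr rfl fun i _ => mul_comm _ _
    rw [h1, hDinner]
  have hDc : IsCompactOperator (⇑D) := by
    rw [hD]
    have : ∀ (s : Finset (Fin n)), IsCompactOperator
        (⇑(∑ i ∈ s, (ContinuousLinearMap.toSpanSingleton ℝ (f i)).comp (innerSL ℝ (f i)))) := by
      intro s
      induction s using Finset.induction_on with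
      | empty => simpa using isCompactOperator_zero
      | @insert a s ha ih =>
        rw [Finset.sum_insert ha, ContinuousLinearMap.coe_add']
        exact (rankOne_isCompact (f a)).add ih
    exact this Finset.univ
  -- the operator B'
  set T' : H →L[ℝ] H := T - D with hT'
  set B' : H →L[ℝ] H := ContinuousLinearMap.id ℝ H + T' with hB'
  have hB'app : ∀ y : H, B' y = y + T' y := by
    intro y
    simp [hB']
  have hB'sym : (B' : H →ₗ[ℝ] H).IsSymmetric := by
    intro x y
    show ⟪B' x, y⟫_ℝ = ⟪x, B' y⟫_ℝ
    have h1 : B' x = x + T x - D x := by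
      simp [hB', hT', sub_eq_add_neg]; abel
    have h2 : B' y = y + T y - D y := by
      simp [hB', hT', sub_eq_add_neg]; abel
    rw [h1, h2]
    simp only [inner_sub_left, inner_sub_right, inner_add_left, inner_add_right]
    have e1 : ⟪T x, y⟫_ℝ = ⟪x, T y⟫_ℝ := hTsym' x y
    have e2 : ⟪D x, y⟫_ℝ = ⟪x, D y⟫_ℝ := hDsym x y
    linarith
  have hB'sa : IsSelfAdjoint B' :=
    ContinuousLinearMap.isSelfAdjoint_iff_isSymmetric.mpr hB'sym
  -- the key identity
  have hident : ∀ x : H, ⟪S x, B' (S x)⟫_ℝ = ⟪x, C x⟫_ℝ + ⟪x, A x⟫_ℝ := by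
    intro x
    have h1 : B' (S x) = S x + T (S x) - D (S x) := by
      simp [hB', hT', sub_eq_add_neg]; abel
    rw [h1, inner_sub_right, inner_add_right]
    have h2 : ⟪S x, S x⟫_ℝ = ⟪x, C x⟫_ℝ + ⟪x, P x⟫_ℝ := by
      rw [hSsym' x (S x), hSS, inner_add_right]
    have h3 : ⟪S x, T (S x)⟫_ℝ = ⟪x, A x⟫_ℝ := by
      rw [hSsym' x (T (S x))]
      have := congrArg (fun (g : H →L[ℝ] H) => g x) hTS
      simp only [ContinuousLinearMap.comp_apply] at this
      rw [this]
    have h4 : ⟪S x, D (S x)⟫_ℝ = ⟪x, P x⟫_ℝ := by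
      rw [hDinner, hPsum]
      refine Finset.sum_congr rfl fun i _ => ?_
      rw [hfS]
      ring
    rw [h2, h3, h4]
    ring
  -- positivity of B' by density
  have hB'pos : ∀ y : H, 0 ≤ ⟪y, B' y⟫_ℝ := by
    have hcont : Continuous fun y : H => ⟪y, B' y⟫_ℝ :=
      continuous_id.inner B'.continuous
    have hclosed : IsClosed {y : H | 0 ≤ ⟪y, B' y⟫_ℝ} :=
      isClosed_le continuous_const hcont
    have hsub : Set.range (⇑S) ⊆ {y : H | 0 ≤ ⟪y, B' y⟫_ℝ} := by
      rintro _ ⟨x, rfl⟩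
      simp only [Set.mem_setOf_eq]
      rw [hident x]
      exact hCApos x
    intro y
    have hy : y ∈ closure (Set.range (⇑S)) := hdense y
    exact closure_minimal hsub hclosed hy
  -- compactness of T'
  have hT'c : IsCompactOperator (⇑T') := by
    rw [hT']
    have : (⇑(T - D)) = ⇑T - ⇑D := by
      ext y; simp
    rw [this]
    exact hTc.sub hDc
  -- apply the key spectral lemma
  obtain ⟨l₀, v, hv⟩ := key_spectral B' T' hB'sa hB'pos hT'c hB'app
  refine ⟨l₀, v, ?_⟩
  intro u hu
  obtain ⟨ε, hε, hkey⟩ := hv u hu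
  refine ⟨ε, hε, ?_⟩
  intro x
  have h1 := hkey (S x)
  rw [hident x] at h1
  have h2 : ⟪S u, x⟫_ℝ = ⟪u, S x⟫_ℝ := hSsym' u x
  rw [h2]
  linarith
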